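/- arXiv:2303.15976 — 3 statements merged into one kernel-verified Lean document; each statement's English description precedes it below -/
import Mathlib

section
/- For a convex body K in R^n with centroid at the origin, the difference body K - K is contained in (n+1)·K. -/
open MeasureTheory Pointwise

/-- Key lemma: if the centroid of `K` is `0` and `y ∈ K` then `-(1/n) • y ∈ K`. -/
theorem aux_neg_inv_smul_mem {n : ℕ} (hn : 0 < n) (K : Set (Fin n → ℝ))
    (hconv : Convex ℝ K) (hcomp : IsCompact K) (hint : (interior K).Nonempty)
    (hcent : (∫ x in K, x ∂(volume)) = (0 : Fin n → ℝ))
    {y : Fin n → ℝ} (hy : y ∈ K) : -((n : ℝ)⁻¹) • y ∈ K := by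
  have hmeasK : MeasurableSet K := hcomp.measurableSet
  have hVfin : volume K ≠ ⊤ := hcomp.measure_lt_top.ne
  have hVpos : 0 < volume K :=
    lt_of_lt_of_le (isOpen_interior.measure_pos volume hint) (measure_mono interior_subset)
  set V : ℝ := (volume K).toReal with hV
  have hVposR : 0 < V := ENNReal.toReal_pos hVpos.ne' hVfin
  have hintg : IntegrableOn (fun x => x) K volume :=
    continuous_id.continuousOn.integrableOn_compact hcomp
  have : Fact (volume K < ⊤) := ⟨hVfin.lt_top⟩
  -- the main claim: for s ∈ (0,1), the point -(s^n * (1-s)/(1-s^n)) • y ∈ K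
  have key : ∀ s : ℝ, s ∈ Set.Ioo (0:ℝ) 1 →
      (-(s ^ n * (1 - s) / (1 - s ^ n))) • y ∈ K := by
    intro s hs
    obtain ⟨hs0, hs1⟩ := hs
    set T : (Fin n → ℝ) → (Fin n → ℝ) := fun x => (1 - s) • y + s • x with hT
    have hTK : T '' K ⊆ K := by
      rintro _ ⟨x, hx, rfl⟩
      exact hconv hy hx (by linarith) hs0.le (by ring)
    have hder : ∀ x ∈ K, HasFDerivWithinAt T
        (s • ContinuousLinearMap.id ℝ (Fin n → ℝ)) K x := by
      intro x hx
      exact (((hasFDerivAt_id x).const_smul s).const_add ((1 - s) • y)).hasFDerivWithinAt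
    have hinj : Set.InjOn T K := by
      intro a _ b _ h
      have : s • a = s • b := by
        simpa [T] using h
      exact smul_right_injective _ hs0.ne' this
    have hdet : |(s • ContinuousLinearMap.id ℝ (Fin n → ℝ)).det| = s ^ n := by
      rw [ContinuousLinearMap.det]
      simp only [ContinuousLinearMap.coe_smul, ContinuousLinearMap.coe_id]
      rw [LinearMap.det_smul, LinearMap.det_id, Module.finrank_fin_fun]
      rw [abs_of_nonneg (by positivity)]
      ring
    -- integral of x over T '' K
    have hi1 : ∫ x in T '' K, x = (s ^ n * (1 - s) * V) • y := by
      rw [integral_image_eq_integral_abs_det_fderiv_smul volume hmeasK hder hinj]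
      simp only [hdet]
      have heq : (fun x => s ^ n • T x)
          = fun x : Fin n → ℝ => (s ^ n * (1 - s)) • y + (s ^ n * s) • x := by
        funext x; simp [T, smul_smul, smul_add]
      have hint2 : IntegrableOn (fun x : Fin n → ℝ => (s ^ n * s) • x) K volume :=
        hintg.smul (s ^ n * s)
      rw [heq, integral_add (integrable_const _) hint2]
      rw [setIntegral_const, integral_smul, hcent, smul_zero, add_zero, hV, smul_smul]
      rw [show volume.real K = (volume K).toReal from rfl]
      ring_nf
    -- volume of T '' K
    have hi2 : (volume (T '' K)).toReal = s ^ n * V := by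
      have h1 : ∫ _x in T '' K, (1:ℝ) = (volume (T '' K)).toReal := by
        simp [setIntegral_const]
        rfl
      have h2 : ∫ x in T '' K, (1:ℝ) = s ^ n * V := by
        rw [integral_image_eq_integral_abs_det_fderiv_smul volume hmeasK hder hinj]
        simp only [hdet, smul_eq_mul, mul_one]
        simp [setIntegral_const, hV, mul_comm]
        exact Or.inl rfl
      rw [← h1, h2]
    have hTmeas : MeasurableSet (T '' K) :=
      ((hcomp.image (continuous_const.add (continuous_id.const_smul s))).measurableSet)
    have hTfin : volume (T '' K) ≠ ⊤ := ((hcomp.image (continuous_const.add (continuous_id.const_smul s))).measure_lt_top).ne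
    -- the annulus A
    set A : Set (Fin n → ℝ) := K \ T '' K with hA
    have hAvol : (volume A).toReal = (1 - s ^ n) * V := by
      rw [hA, measure_diff hTK hTmeas.nullMeasurableSet hTfin,
        ENNReal.toReal_sub_of_le (measure_mono hTK) hVfin, hi2, ← hV]
      ring
    have hsn1 : s ^ n < 1 := pow_lt_one₀ hs0.le hs1 hn.ne'
    have hne1 : (1:ℝ) - s ^ n ≠ 0 := by nlinarith
    have hApos : volume A ≠ 0 := by
      intro h
      have h0 : (volume A).toReal = 0 := by simp [h]
      rw [hAvol] at h0
      rcases mul_eq_zero.mp h0 with h' | h' <;> nlinarith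
    have hAfin : volume A ≠ ⊤ := ne_top_of_le_ne_top hVfin (measure_mono Set.diff_subset)
    have hAint : ∫ x in A, x = (-(s ^ n * (1 - s) * V)) • y := by
      rw [hA, integral_diff hTmeas hintg hTK, hcent, hi1, zero_sub, neg_smul]
    -- average of x over A lies in K
    have havg : (⨍ x in A, x ∂(volume)) ∈ K := by
      refine hconv.set_average_mem hcomp.isClosed hApos hAfin ?_ (hintg.mono_set Set.diff_subset)
      filter_upwards [ae_restrict_mem (hmeasK.diff hTmeas)] with x hx
      exact hx.1
    have : (⨍ x in A, x ∂(volume)) = (-(s ^ n * (1 - s) / (1 - s ^ n))) • y := by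
      rw [setAverage_eq, hAint, show volume.real A = (volume A).toReal from rfl, hAvol, smul_smul]
      congr 1
      field_simp [hne1, hVposR.ne']
    rwa [this] at havg
  -- take the limit s → 1⁻
  have hlim : Filter.Tendsto (fun s : ℝ => (-(s ^ n * (1 - s) / (1 - s ^ n))) • y)
      (nhdsWithin 1 (Set.Ioo (0:ℝ) 1)) (nhds ((-(n : ℝ)⁻¹) • y)) := by
    have heq : ∀ s ∈ Set.Ioo (0:ℝ) 1,
        (-(s ^ n * (1 - s) / (1 - s ^ n))) • y
          = (-(s ^ n / (∑ i ∈ Finset.range n, s ^ i))) • y := by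
      intro s hs
      have hgeom : (1 - s) * (∑ i ∈ Finset.range n, s ^ i) = 1 - s ^ n := by
        have := geom_sum_mul s n
        nlinarith [this]
      have hsum : (0:ℝ) < ∑ i ∈ Finset.range n, s ^ i := by
        apply Finset.sum_pos
        · intro i _; exact pow_pos hs.1 i
        · exact Finset.nonempty_range_iff.2 hn.ne'
      have hne1 : (1:ℝ) - s ^ n ≠ 0 := by
        have : s ^ n < 1 := pow_lt_one₀ hs.1.le hs.2 hn.ne'
        nlinarith
      congr 1
      rw [neg_inj, div_eq_div_iff hne1 hsum.ne']
      linear_combination (s ^ n) * hgeom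
    have hcont : Filter.Tendsto (fun s : ℝ => (-(s ^ n / (∑ i ∈ Finset.range n, s ^ i))) • y)
        (nhdsWithin 1 (Set.Ioo (0:ℝ) 1)) (nhds ((-(n : ℝ)⁻¹) • y)) := by
      have hsum1 : (∑ i ∈ Finset.range n, (1:ℝ) ^ i) = n := by simp
      have : ContinuousAt (fun s : ℝ => (-(s ^ n / (∑ i ∈ Finset.range n, s ^ i))) • y) 1 := by
        apply ContinuousAt.fun_smul
        · apply ContinuousAt.neg
          apply ContinuousAt.div
          · fun_prop
          · fun_prop
          · rw [hsum1]; exact_mod_cast hn.ne'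
        · exact continuousAt_const
      have h1 : (-(((1:ℝ)) ^ n / (∑ i ∈ Finset.range n, (1:ℝ) ^ i))) • y = (-(n : ℝ)⁻¹) • y := by
        rw [hsum1]; simp [one_div]
      rw [← h1]
      exact this.continuousWithinAt
    exact Filter.Tendsto.congr' (by
      filter_upwards [self_mem_nhdsWithin] with s hs
      exact (heq s hs).symm) hcont
  have hne : (nhdsWithin (1:ℝ) (Set.Ioo 0 1)).NeBot := by
    apply mem_closure_iff_nhdsWithin_neBot.mp
    rw [closure_Ioo (by norm_num : (0:ℝ) ≠ 1)]
    exact Set.right_mem_Icc.2 (by norm_num)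
  exact hcomp.isClosed.mem_of_tendsto hlim
    (Filter.eventually_iff_exists_mem.2 ⟨Set.Ioo 0 1, self_mem_nhdsWithin, key⟩)


/-- For a convex body `K ⊆ ℝⁿ` (compact, convex, with nonempty interior)
whose centroid is the origin, the difference body `K - K` is contained in `(n+1) • K`. -/
theorem difference_body_subset_of_centered {n : ℕ} (K : Set (Fin n → ℝ))
    (hconv : Convex ℝ K) (hcomp : IsCompact K) (hint : (interior K).Nonempty)
    (hcent : (∫ x in K, x ∂(volume)) = (0 : Fin n → ℝ)) :
    K - K ⊆ ((n : ℝ) + 1) • K := by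
  rcases Nat.eq_zero_or_pos n with hn | hn
  · subst hn
    rintro z ⟨x, hx, y, hy, rfl⟩
    refine ⟨x, hx, ?_⟩
    simp only [Nat.cast_zero, zero_add, one_smul]
    funext i
    exact absurd i.2 (by omega)
  · rintro z ⟨x, hx, y, hy, rfl⟩
    have hz : -((n : ℝ)⁻¹) • y ∈ K :=
      aux_neg_inv_smul_mem hn K hconv hcomp hint hcent hy
    have hnR : (0:ℝ) < n := by exact_mod_cast hn
    have hw : (((n : ℝ) + 1)⁻¹) • x + ((n : ℝ) / ((n : ℝ) + 1)) • (-((n : ℝ)⁻¹) • y) ∈ K := by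
      apply hconv hx hz
      · positivity
      · positivity
      · field_simp; ring
    refine ⟨_, hw, ?_⟩
    show ((n : ℝ) + 1) • _ = x - y
    rw [smul_add, smul_smul, smul_smul, smul_smul]
    have h1 : ((n : ℝ) + 1) * ((n : ℝ) + 1)⁻¹ = 1 := by
      field_simp
    have h2 : ((n : ℝ) + 1) * ((n : ℝ) / ((n : ℝ) + 1)) * -(n : ℝ)⁻¹ = -1 := by
      field_simp
    rw [h1, h2, one_smul, neg_one_smul, sub_eq_add_neg]
end

section
/- For every convex body K in R^n with covering radius μ(K) ≤ 1 with respect to Z^n, the number of lattice points satisfies (1−μ(K))^n · vol(K) ≤ |K ∩ Z^n|. -/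
open MeasureTheory Pointwise

/-- The integer lattice `ℤⁿ` viewed as a subset of `ℝⁿ`. -/
def intLat (n : ℕ) : Set (Fin n → ℝ) := {x | ∀ i, ∃ m : ℤ, x i = (m : ℝ)}

/-- The number of integer points of a set `S ⊆ ℝⁿ`. -/
noncomputable def latCount {n : ℕ} (S : Set (Fin n → ℝ)) : ℕ :=
  Nat.card ↥(S ∩ intLat n)

/-- The covering radius of `K` with respect to `ℤⁿ`. -/
noncomputable def covRad {n : ℕ} (K : Set (Fin n → ℝ)) : ℝ :=
  sInf {μ : ℝ | 0 ≤ μ ∧ ∀ x : Fin n → ℝ, ∃ c ∈ K, ∃ z ∈ intLat n, x = μ • c + z}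

namespace CovRadAux

/-- Embedding of integer vectors into `ℝⁿ`. -/
def latEmb {n : ℕ} (z : Fin n → ℤ) : Fin n → ℝ := fun i => (z i : ℝ)

lemma latEmb_mem {n : ℕ} (z : Fin n → ℤ) : latEmb z ∈ intLat n :=
  fun i => ⟨z i, rfl⟩

lemma latEmb_injective {n : ℕ} : Function.Injective (latEmb (n := n)) := by
  intro a b h
  funext i
  have := congrFun h i
  simp only [latEmb] at this
  exact_mod_cast this

lemma mem_intLat_iff {n : ℕ} {x : Fin n → ℝ} :
    x ∈ intLat n ↔ ∃ z : Fin n → ℤ, x = latEmb z := by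
  constructor
  · intro hx
    exact ⟨fun i => (hx i).choose, funext fun i => (hx i).choose_spec⟩
  · rintro ⟨z, rfl⟩
    exact latEmb_mem z

lemma intLat_add {n : ℕ} {x y : Fin n → ℝ} (hx : x ∈ intLat n) (hy : y ∈ intLat n) :
    x + y ∈ intLat n := by
  intro i
  obtain ⟨a, ha⟩ := hx i
  obtain ⟨b, hb⟩ := hy i
  exact ⟨a + b, by simp [ha, hb]⟩

lemma intLat_neg {n : ℕ} {x : Fin n → ℝ} (hx : x ∈ intLat n) : -x ∈ intLat n := by
  intro i
  obtain ⟨a, ha⟩ := hx i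
  exact ⟨-a, by simp [ha]⟩

lemma finite_inter {n : ℕ} {K : Set (Fin n → ℝ)} (hK : Bornology.IsBounded K) :
    (K ∩ intLat n).Finite := by
  obtain ⟨R, hR⟩ := hK.subset_closedBall 0
  have hsub : K ∩ intLat n ⊆ latEmb '' (Set.univ.pi fun _ : Fin n => Set.Icc (-⌈R⌉) ⌈R⌉) := by
    rintro x ⟨hxK, hxL⟩
    obtain ⟨z, rfl⟩ := mem_intLat_iff.mp hxL
    refine ⟨z, ?_, rfl⟩
    intro i _
    have hx : dist (latEmb z) 0 ≤ R := by
      simpa [Metric.mem_closedBall] using hR hxK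
    have hcoord : |(z i : ℝ)| ≤ R := by
      have := dist_le_pi_dist (latEmb z) 0 i
      have h2 : dist ((latEmb z) i) 0 ≤ R := le_trans this hx
      simpa [latEmb, Real.dist_eq] using h2
    have h1 : (z i : ℝ) ≤ R := le_trans (le_abs_self _) hcoord
    have h2 : (-(z i) : ℝ) ≤ R := le_trans (neg_le_abs _) (by simpa using hcoord)
    constructor
    · have : (-⌈R⌉ : ℝ) ≤ (z i : ℝ) := by
        have : (z i : ℝ) ≥ -R := by linarith
        have hRceil : R ≤ (⌈R⌉ : ℝ) := Int.le_ceil R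
        linarith
      exact_mod_cast this
    · have : (z i : ℝ) ≤ (⌈R⌉ : ℝ) := le_trans h1 (Int.le_ceil R)
      exact_mod_cast this
  exact Set.Finite.subset (Set.Finite.image _ (Set.Finite.pi fun _ => Set.finite_Icc _ _)) hsub

/-- Countwise bound: any translate of `(1-μ')•K` has at most `|K ∩ ℤⁿ|` lattice points. -/
lemma count_translate_le {n : ℕ} {K : Set (Fin n → ℝ)} (hconv : Convex ℝ K)
    (hfin : (K ∩ intLat n).Finite)
    {μ' : ℝ} (h0 : 0 ≤ μ') (h1 : μ' ≤ 1)
    (hcov : ∀ x : Fin n → ℝ, ∃ c ∈ K, ∃ z ∈ intLat n, x = μ' • c + z)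
    (t : Fin n → ℝ) :
    ({y | y + t ∈ (1 - μ') • K} ∩ intLat n).Finite ∧
      ({y | y + t ∈ (1 - μ') • K} ∩ intLat n).ncard ≤ (K ∩ intLat n).ncard := by
  obtain ⟨c, hc, z₀, hz₀, hrep⟩ := hcov (-t)
  set A := {y | y + t ∈ (1 - μ') • K} ∩ intLat n with hA
  have hinj : Function.Injective (fun y : Fin n → ℝ => y + (-z₀)) :=
    fun a b h => by simpa using congrArg (fun w => w + z₀) h
  have himg : (fun y => y + (-z₀)) '' A ⊆ K ∩ intLat n := by
    rintro _ ⟨y, ⟨hyK, hyL⟩, rfl⟩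
    obtain ⟨k, hk, hksp⟩ := hyK
    have hmem : (1 - μ') • k + μ' • c ∈ K := hconv hk hc (by linarith) h0 (by ring)
    have hmc : μ' • c = -t - z₀ := by
      have := hrep
      rw [eq_comm] at this
      -- this : μ' • c + z₀ = -t
      exact eq_sub_of_add_eq this
    have heq : y + (-z₀) = (1 - μ') • k + μ' • c := by
      rw [hmc, show (1 - μ') • k = y + t from hksp]; abel
    refine ⟨?_, intLat_add hyL (intLat_neg hz₀)⟩
    show y + -z₀ ∈ K
    rw [heq]; exact hmem
  have hAfin : A.Finite := by
    have := (hfin.subset himg)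
    exact Set.Finite.of_finite_image this hinj.injOn
  refine ⟨hAfin, ?_⟩
  calc A.ncard = ((fun y => y + (-z₀)) '' A).ncard := (Set.ncard_image_of_injective A hinj).symm
    _ ≤ (K ∩ intLat n).ncard := Set.ncard_le_ncard himg hfin

/-- Volume bound: `vol((1-μ')•K) ≤ |K ∩ ℤⁿ|`. -/
lemma volume_smul_le {n : ℕ} {K : Set (Fin n → ℝ)} (hconv : Convex ℝ K)
    (hcomp : IsCompact K)
    {μ' : ℝ} (h0 : 0 ≤ μ') (h1 : μ' ≤ 1)
    (hcov : ∀ x : Fin n → ℝ, ∃ c ∈ K, ∃ z ∈ intLat n, x = μ' • c + z) :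
    volume ((1 - μ') • K) ≤ (((K ∩ intLat n).ncard : ℕ) : ENNReal) := by
  have hfin : (K ∩ intLat n).Finite := finite_inter hcomp.isBounded
  set N := (K ∩ intLat n).ncard with hN
  set S := (1 - μ') • K with hS
  have hSim : S = (fun x : Fin n → ℝ => (1 - μ') • x) '' K := by
    rw [hS, ← Set.image_smul]
  have hScomp : IsCompact S := by
    rw [hSim]; exact hcomp.image (continuous_const_smul _)
  have hSm : MeasurableSet S := hScomp.isClosed.measurableSet
  set F : Set (Fin n → ℝ) := Set.univ.pi fun _ => Set.Ico (0:ℝ) 1 with hF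
  have hFm : MeasurableSet F := MeasurableSet.univ_pi fun _ => measurableSet_Ico
  have hFvol : volume F = 1 := by
    rw [hF, volume_pi_pi]
    simp [Real.volume_Ico]
  set B : (Fin n → ℤ) → Set (Fin n → ℝ) := fun z => ((fun t => latEmb z + t) ⁻¹' S) ∩ F with hB
  have hBm : ∀ z, MeasurableSet (B z) := fun z =>
    ((measurable_const_add (latEmb z)) hSm).inter hFm
  have hBF : ∀ z, B z ⊆ F := fun z => Set.inter_subset_right
  -- decomposition of S into translated pieces
  have hU : (⋃ z : Fin n → ℤ, (latEmb z +ᵥ B z)) = S := by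
    ext x
    constructor
    · rintro ⟨_, ⟨z, rfl⟩, t, ⟨htS, htF⟩, rfl⟩
      exact htS
    · intro hx
      refine Set.mem_iUnion.mpr ⟨fun i => ⌊x i⌋, x - latEmb (fun i => ⌊x i⌋), ⟨?_, ?_⟩, by simp only [vadd_eq_add]; abel⟩
      · show latEmb _ + (x - latEmb _) ∈ S
        simpa using hx
      · intro i _
        simp only [latEmb, Pi.sub_apply]
        exact ⟨sub_nonneg.mpr (Int.floor_le _), sub_lt_iff_lt_add.mpr (by linarith [Int.lt_floor_add_one (x i)])⟩
  have hdisj : Pairwise (Function.onFun Disjoint fun z : Fin n → ℤ => (latEmb z +ᵥ B z)) := by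
    intro z w hzw
    rw [Function.onFun, Set.disjoint_left]
    rintro x ⟨t, ⟨_, htF⟩, rfl⟩ ⟨u, ⟨_, huF⟩, heq⟩
    apply hzw
    funext i
    have heqi := congrFun heq i
    have ht := htF i (Set.mem_univ i)
    have hu := huF i (Set.mem_univ i)
    simp only [latEmb, vadd_eq_add, Pi.add_apply, Set.mem_Ico] at heqi ht hu
    have e1 : ⌊(z i : ℝ) + t i⌋ = z i := Int.floor_eq_iff.mpr
      ⟨by linarith [ht.1], by push_cast; linarith [ht.2]⟩
    have e2 : ⌊(z i : ℝ) + t i⌋ = w i := Int.floor_eq_iff.mpr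
      ⟨by rw [← heqi]; linarith [hu.1], by rw [← heqi]; push_cast; linarith [hu.2]⟩
    rw [← e1, e2]
  have hmeasv : ∀ z : Fin n → ℤ, MeasurableSet (latEmb z +ᵥ B z) := fun z =>
    (hBm z).const_vadd (latEmb z)
  have hsum : volume S = ∑' z : Fin n → ℤ, volume (B z) := by
    rw [← hU, measure_iUnion hdisj hmeasv]
    exact tsum_congr fun z => measure_vadd volume (latEmb z) (B z)
  -- pointwise count bound
  have hcount : ∀ t, (∑' z : Fin n → ℤ, (B z).indicator (1 : (Fin n → ℝ) → ENNReal) t)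
      ≤ F.indicator (fun _ => (N : ENNReal)) t := by
    intro t
    by_cases htF : t ∈ F
    · set St := {z : Fin n → ℤ | latEmb z + t ∈ S} with hSt
      have hterm : ∀ z, (B z).indicator (1 : (Fin n → ℝ) → ENNReal) t
          = St.indicator (fun _ => (1 : ENNReal)) z := by
        intro z
        by_cases hz : z ∈ St
        · have hBz : t ∈ B z := ⟨(hz : latEmb z + t ∈ S), htF⟩
          rw [Set.indicator_of_mem hBz, Set.indicator_of_mem hz]; rfl
        · rw [Set.indicator_of_notMem hz, Set.indicator_of_notMem (fun h => hz h.1)]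
      obtain ⟨hAfin, hAcard⟩ := count_translate_le hconv hfin h0 h1 hcov t
      have hpre : St = latEmb ⁻¹' ({y | y + t ∈ (1 - μ') • K} ∩ intLat n) := by
        ext z
        constructor
        · intro hz; exact ⟨hz, latEmb_mem z⟩
        · intro hz; exact hz.1
      have hStfin : St.Finite := by
        rw [hpre]; exact hAfin.preimage latEmb_injective.injOn
      have hStcard : St.ncard ≤ N := by
        have himg : latEmb '' St ⊆ {y | y + t ∈ (1 - μ') • K} ∩ intLat n := by
          rw [hpre]; exact Set.image_preimage_subset _ _
        calc St.ncard = (latEmb '' St).ncard := (Set.ncard_image_of_injective St latEmb_injective).symm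
          _ ≤ ({y | y + t ∈ (1 - μ') • K} ∩ intLat n).ncard := Set.ncard_le_ncard himg hAfin
          _ ≤ N := hAcard
      calc (∑' z : Fin n → ℤ, (B z).indicator (1 : (Fin n → ℝ) → ENNReal) t)
          = ∑' z : Fin n → ℤ, St.indicator (fun _ => (1 : ENNReal)) z := tsum_congr hterm
        _ = ∑ z ∈ hStfin.toFinset, St.indicator (fun _ => (1 : ENNReal)) z :=
            tsum_eq_sum (fun z hz => Set.indicator_of_notMem (by simpa using hz) _)
        _ = ∑ z ∈ hStfin.toFinset, (1 : ENNReal) :=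
            Finset.sum_congr rfl (fun z hz => Set.indicator_of_mem (by simpa using hz) _)
        _ = (hStfin.toFinset.card : ENNReal) := by simp
        _ = (St.ncard : ENNReal) := by rw [Set.ncard_eq_toFinset_card _ hStfin]
        _ ≤ (N : ENNReal) := Nat.cast_le.mpr hStcard
        _ = F.indicator (fun _ => (N : ENNReal)) t := (Set.indicator_of_mem htF (fun _ => (N : ENNReal))).symm
    · have : ∀ z : Fin n → ℤ, (B z).indicator (1 : (Fin n → ℝ) → ENNReal) t = 0 :=
        fun z => Set.indicator_of_notMem (fun h => htF (hBF z h)) _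
      rw [tsum_congr this, Set.indicator_of_notMem htF]
      simp
  calc volume S = ∑' z : Fin n → ℤ, volume (B z) := hsum
    _ = ∑' z : Fin n → ℤ, ∫⁻ t, (B z).indicator 1 t := by
        exact tsum_congr fun z => (lintegral_indicator_one (hBm z)).symm
    _ = ∫⁻ t, ∑' z : Fin n → ℤ, (B z).indicator 1 t :=
        (lintegral_tsum fun z => (measurable_one.indicator (hBm z)).aemeasurable).symm
    _ ≤ ∫⁻ t, F.indicator (fun _ => (N : ENNReal)) t := lintegral_mono hcount
    _ = (N : ENNReal) * volume F := lintegral_indicator_const hFm _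
    _ = (N : ENNReal) := by rw [hFvol, mul_one]

/-- Core inequality for an actual covering parameter. -/
lemma core {n : ℕ} {K : Set (Fin n → ℝ)} (hconv : Convex ℝ K) (hcomp : IsCompact K)
    {μ' : ℝ} (h0 : 0 ≤ μ') (h1 : μ' ≤ 1)
    (hcov : ∀ x : Fin n → ℝ, ∃ c ∈ K, ∃ z ∈ intLat n, x = μ' • c + z) :
    (1 - μ') ^ n * (volume K).toReal ≤ ((K ∩ intLat n).ncard : ℝ) := by
  have hvol := volume_smul_le hconv hcomp h0 h1 hcov
  have hsmul : volume ((1 - μ') • K) = ENNReal.ofReal ((1 - μ') ^ n) * volume K := by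
    rw [Measure.addHaar_smul]
    congr 2
    rw [Module.finrank_fintype_fun_eq_card, Fintype.card_fin]
    exact abs_of_nonneg (pow_nonneg (by linarith) n)
  rw [hsmul] at hvol
  have h := ENNReal.toReal_mono (ENNReal.natCast_ne_top _) hvol
  rw [ENNReal.toReal_mul, ENNReal.toReal_ofReal (pow_nonneg (by linarith) n)] at h
  simpa using h

/-- The covering set is nonempty when `K` has nonempty interior. -/
lemma covSet_nonempty {n : ℕ} {K : Set (Fin n → ℝ)} (hint : (interior K).Nonempty) :
    {μ : ℝ | 0 ≤ μ ∧ ∀ x : Fin n → ℝ, ∃ c ∈ K, ∃ z ∈ intLat n, x = μ • c + z}.Nonempty := by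
  obtain ⟨x₀, hx₀⟩ := hint
  obtain ⟨ε, hε, hball⟩ := Metric.isOpen_iff.mp isOpen_interior x₀ hx₀
  set μ' : ℝ := max 1 (1/ε) with hμ'
  have hμ'pos : 0 < μ' := lt_of_lt_of_le one_pos (le_max_left _ _)
  refine ⟨μ', ⟨le_of_lt hμ'pos, fun x => ?_⟩⟩
  set z : Fin n → ℤ := fun i => ⌊x i - μ' * x₀ i + 1/2⌋ with hz
  set c : Fin n → ℝ := μ'⁻¹ • (x - latEmb z) with hc
  have hcK : c ∈ K := by
    apply interior_subset
    apply hball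
    rw [Metric.mem_ball, dist_pi_lt_iff hε]
    intro i
    have h1 : (z i : ℝ) ≤ x i - μ' * x₀ i + 1/2 := Int.floor_le _
    have h2 : x i - μ' * x₀ i + 1/2 < z i + 1 := Int.lt_floor_add_one _
    have habs : |x i - z i - μ' * x₀ i| ≤ 1/2 := by
      rw [abs_le]; constructor <;> linarith
    have hci : c i - x₀ i = (x i - z i - μ' * x₀ i) / μ' := by
      simp only [hc, latEmb, Pi.smul_apply, Pi.sub_apply, smul_eq_mul]
      field_simp
    have hεμ : 1 ≤ ε * μ' := by
      have hmr : 1/ε ≤ μ' := le_max_right _ _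
      calc (1:ℝ) = ε * (1/ε) := by field_simp
        _ ≤ ε * μ' := mul_le_mul_of_nonneg_left hmr hε.le
    rw [Real.dist_eq, hci, abs_div, abs_of_pos hμ'pos]
    calc |x i - z i - μ' * x₀ i| / μ' ≤ (1/2) / μ' := by gcongr
      _ < ε := by rw [div_lt_iff₀ hμ'pos]; nlinarith
  refine ⟨c, hcK, latEmb z, latEmb_mem z, ?_⟩
  rw [hc, smul_smul, mul_inv_cancel₀ (ne_of_gt hμ'pos), one_smul]
  abel

end CovRadAux

/-- if `μ(K) ≤ 1` then `(1-μ(K))^n · vol(K) ≤ G(K)`. -/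
theorem covRad_volume_lower_bound {n : ℕ} (K : Set (Fin n → ℝ))
    (hconv : Convex ℝ K) (hcomp : IsCompact K) (hint : (interior K).Nonempty)
    (hmu : covRad K ≤ 1) :
    (1 - covRad K) ^ n * (volume K).toReal ≤ (latCount K : ℝ) := by
  classical
  have hKne : K.Nonempty := hint.mono interior_subset
  have hlat : (latCount K : ℝ) = ((K ∩ intLat n).ncard : ℝ) := by
    rw [latCount, Nat.card_coe_set_eq]
  set Mset := {μ : ℝ | 0 ≤ μ ∧ ∀ x : Fin n → ℝ, ∃ c ∈ K, ∃ z ∈ intLat n, x = μ • c + z}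
    with hM
  have hMne : Mset.Nonempty := CovRadAux.covSet_nonempty hint
  have hcr : covRad K = sInf Mset := rfl
  rcases lt_or_eq_of_le hmu with hlt | heq1
  · set v := (volume K).toReal with hv
    have hv0 : 0 ≤ v := ENNReal.toReal_nonneg
    have key : ∀ s : ℝ, covRad K < s → s ≤ 1 → (1 - s) ^ n * v ≤ (latCount K : ℝ) := by
      intro s hs hs1
      obtain ⟨μ', hμ'M, hμ's⟩ := exists_lt_of_csInf_lt hMne (hcr ▸ hs)
      have hcore := CovRadAux.core hconv hcomp hμ'M.1 (le_trans hμ's.le hs1) hμ'M.2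
      rw [hlat]
      calc (1 - s) ^ n * v ≤ (1 - μ') ^ n * v := by
            refine mul_le_mul_of_nonneg_right ?_ hv0
            exact pow_le_pow_left₀ (by linarith) (by linarith) n
        _ ≤ _ := hcore
    have htend : Filter.Tendsto (fun s : ℝ => (1 - s) ^ n * v)
        (nhdsWithin (covRad K) (Set.Ioi (covRad K))) (nhds ((1 - covRad K) ^ n * v)) := by
      refine Filter.Tendsto.mono_left ?_ nhdsWithin_le_nhds
      exact (((continuous_const.sub continuous_id).pow n).mul continuous_const).tendsto _
    have hev : ∀ᶠ s in nhdsWithin (covRad K) (Set.Ioi (covRad K)),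
        (1 - s) ^ n * v ≤ (latCount K : ℝ) := by
      filter_upwards [Ioo_mem_nhdsGT_of_mem (Set.mem_Ico.mpr ⟨le_refl _, hlt⟩)] with s hs
      exact key s hs.1 hs.2.le
    exact le_of_tendsto htend hev
  · rcases Nat.eq_zero_or_pos n with hn | hn
    · exfalso
      subst hn
      have h0M : (0:ℝ) ∈ Mset := by
        refine ⟨le_refl _, fun x => ?_⟩
        obtain ⟨c, hc⟩ := hKne
        exact ⟨c, hc, x, fun i => i.elim0, by funext i; exact i.elim0⟩
      have hle : covRad K ≤ 0 := csInf_le ⟨0, fun a ha => ha.1⟩ h0M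
      rw [heq1] at hle
      linarith
    · have hz : (1 - covRad K) ^ n = 0 := by
        rw [← heq1, sub_self, zero_pow hn.ne']
      rw [hz, zero_mul]
      exact Nat.cast_nonneg _
end

section
/- For every convex body K in R^n with |K ∩ Z^n| ≥ 1, there exists a line ℓ ⊂ R^n such that |K ∩ Z^n|^{1/n} ≤ |K ∩ ℓ ∩ Z^n| (Rabinowitz's theorem). -/
open MeasureTheory Pointwise

lemma intLat_finite_inter {n : ℕ} {S : Set (Fin n → ℝ)} (hS : Bornology.IsBounded S) :
    (S ∩ intLat n).Finite := by
  obtain ⟨R, hR⟩ := hS.subset_closedBall 0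
  have key : (S ∩ intLat n) ⊆ (fun (m : Fin n → ℤ) (i : Fin n) => (m i : ℝ)) ''
      (Set.pi Set.univ (fun _ => Set.Icc (-⌈R⌉) ⌈R⌉)) := by
    rintro x ⟨hxS, hx⟩
    refine ⟨fun i => ⌊x i⌋, fun i _ => ?_, funext fun i => ?_⟩
    · obtain ⟨m, hm⟩ := hx i
      have hxi : |x i| ≤ R := by
        have h := hR hxS
        rw [Metric.mem_closedBall, dist_zero_right] at h
        calc |x i| = ‖x i‖ := (Real.norm_eq_abs _).symm
          _ ≤ ‖x‖ := norm_le_pi_norm x i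
          _ ≤ R := h
      have : |⌊x i⌋| ≤ ⌈R⌉ := by
        have h1 : ((|⌊x i⌋| : ℤ) : ℝ) ≤ (⌈R⌉ : ℝ) := by
          push_cast
          rw [hm, Int.floor_intCast]
          calc |(m:ℝ)| = |x i| := by rw [hm]
            _ ≤ R := hxi
            _ ≤ ⌈R⌉ := Int.le_ceil R
        exact_mod_cast h1
      simpa [Set.mem_Icc] using abs_le.mp this
    · obtain ⟨m, hm⟩ := hx i
      simp [hm, Int.floor_intCast]
  exact Set.Finite.subset ((Set.Finite.pi fun _ => Set.finite_Icc _ _).image _) key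

/-- Rabinowitz: for every convex body `K ⊆ ℝⁿ` containing a lattice point,
there is a line `ℓ` with `G(K)^{1/n} ≤ G(K ∩ ℓ)`. -/
theorem rabinowitz_line_slicing {n : ℕ} (hn : 1 ≤ n) (K : Set (Fin n → ℝ))
    (hconv : Convex ℝ K) (hcomp : IsCompact K) (hne : K.Nonempty)
    (hG : 1 ≤ latCount K) :
    ∃ p v : Fin n → ℝ, v ≠ 0 ∧
      (latCount K : ℝ) ^ (1 / (n : ℝ)) ≤
        (latCount (K ∩ {x | ∃ s : ℝ, x = p + s • v}) : ℝ) := by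
  by_contra hcon
  push_neg at hcon
  -- hcon : ∀ p v, v ≠ 0 → (latCount (K ∩ line p v) : ℝ) < c
  have hn0 : (n : ℝ) ≠ 0 := by
    have : (1:ℝ) ≤ n := by exact_mod_cast hn
    linarith
  set N := latCount K with hNdef
  set c : ℝ := (N : ℝ) ^ (1 / (n : ℝ)) with hcdef
  have hSfin : (K ∩ intLat n).Finite := intLat_finite_inter hcomp.isBounded
  haveI : Finite ↥(K ∩ intLat n) := hSfin.to_subtype
  have hSne : (K ∩ intLat n).Nonempty := by
    rw [← Set.nonempty_coe_sort]
    exact (Nat.card_pos_iff.mp (by exact_mod_cast hG : 0 < Nat.card ↥(K ∩ intLat n))).1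
  set m : ℕ := ⌈c⌉₊ - 1 with hmdef
  -- every lattice point lies on some line with v ≠ 0, giving c > 1 hence ⌈c⌉₊ ≥ 2
  obtain ⟨x₀, hx₀⟩ := hSne
  have hv1 : (fun _ : Fin n => (1:ℝ)) ≠ 0 := fun h => one_ne_zero (congrFun h ⟨0, hn⟩)
  have hcount1 : 1 ≤ latCount (K ∩ {x | ∃ s : ℝ, x = x₀ + s • (fun _ : Fin n => (1:ℝ))}) := by
    have hmem : x₀ ∈ (K ∩ {x | ∃ s : ℝ, x = x₀ + s • (fun _ : Fin n => (1:ℝ))}) ∩ intLat n :=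
      ⟨⟨hx₀.1, ⟨0, by simp⟩⟩, hx₀.2⟩
    have hfin : ((K ∩ {x | ∃ s : ℝ, x = x₀ + s • (fun _ : Fin n => (1:ℝ))}) ∩ intLat n).Finite :=
      hSfin.subset (by intro z hz; exact ⟨hz.1.1, hz.2⟩)
    haveI := hfin.to_subtype
    exact Nat.one_le_iff_ne_zero.mpr (Nat.card_ne_zero.mpr ⟨⟨⟨x₀, hmem⟩⟩, inferInstance⟩)
  have hc1 : 1 < c := lt_of_le_of_lt (by exact_mod_cast hcount1) (hcon x₀ _ hv1)
  have hceil2 : 2 ≤ ⌈c⌉₊ := by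
    have : 1 < ⌈c⌉₊ := Nat.lt_ceil.mpr (by exact_mod_cast hc1)
    omega
  have hm1 : 1 ≤ m := by omega
  haveI : NeZero m := ⟨by omega⟩
  -- every line has at most m lattice points of K
  have hline : ∀ p v : Fin n → ℝ, v ≠ 0 →
      latCount (K ∩ {x | ∃ s : ℝ, x = p + s • v}) ≤ m := by
    intro p v hv
    have h := hcon p v hv
    have h2 : (latCount (K ∩ {x | ∃ s : ℝ, x = p + s • v}) : ℝ) < (⌈c⌉₊ : ℝ) :=
      lt_of_lt_of_le h (Nat.le_ceil c)
    have h3 : latCount (K ∩ {x | ∃ s : ℝ, x = p + s • v}) < ⌈c⌉₊ := by exact_mod_cast h2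
    omega
  -- the mod-m reduction map is injective
  set φ : ↥(K ∩ intLat n) → (Fin n → ZMod m) :=
    fun x i => ((⌊(x : Fin n → ℝ) i⌋ : ℤ) : ZMod m) with hφdef
  have hinj : Function.Injective φ := by
    intro x y hxy
    by_contra hne'
    set a : Fin n → ℝ := (x : Fin n → ℝ) with hadef
    set b : Fin n → ℝ := (y : Fin n → ℝ) with hbdef
    have hab : a ≠ b := fun h => hne' (Subtype.ext h)
    have hvne : b - a ≠ 0 := sub_ne_zero.mpr (Ne.symm hab)
    -- integer coordinates
    have haint : ∀ i, a i = (⌊a i⌋ : ℝ) := fun i => by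
      obtain ⟨k, hk⟩ := x.2.2 i; rw [show a i = (k:ℝ) from hk, Int.floor_intCast]
    have hbint : ∀ i, b i = (⌊b i⌋ : ℝ) := fun i => by
      obtain ⟨k, hk⟩ := y.2.2 i; rw [show b i = (k:ℝ) from hk, Int.floor_intCast]
    have hdvd : ∀ i, (m : ℤ) ∣ ⌊b i⌋ - ⌊a i⌋ := by
      intro i
      have := congrFun hxy i
      exact Int.ModEq.dvd ((ZMod.intCast_eq_intCast_iff _ _ _).mp this)
    set d : Fin n → ℤ := fun i => (⌊b i⌋ - ⌊a i⌋) / m with hddef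
    have hd : ∀ i, (m : ℤ) * d i = ⌊b i⌋ - ⌊a i⌋ := fun i => Int.mul_ediv_cancel' (hdvd i)
    -- the m+1 points on segment [a, b]
    have hm0R : (m : ℝ) ≠ 0 := Nat.cast_ne_zero.mpr (by omega)
    set ψ : Fin (m + 1) → (Fin n → ℝ) :=
      fun k => a + ((k : ℝ) / m) • (b - a) with hψdef
    have hψmem : ∀ k : Fin (m + 1),
        ψ k ∈ (K ∩ {x | ∃ s : ℝ, x = a + s • (b - a)}) ∩ intLat n := by
      intro k
      have ht0 : (0:ℝ) ≤ (k : ℝ) / m := by positivity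
      have ht1 : (k : ℝ) / m ≤ 1 := by
        rw [div_le_one (by positivity : (0:ℝ) < m)]
        exact_mod_cast Nat.lt_succ_iff.mp k.2
      refine ⟨⟨?_, ⟨(k : ℝ) / m, rfl⟩⟩, ?_⟩
      · have hK := hconv x.2.1 y.2.1 (by linarith : (0:ℝ) ≤ 1 - (k:ℝ)/m) ht0 (by ring)
        have heq : (1 - (k:ℝ)/m) • a + ((k:ℝ)/m) • b = ψ k := by
          simp only [hψdef]
          rw [sub_smul, one_smul, smul_sub]; abel
        rwa [heq] at hK
      · intro i
        refine ⟨⌊a i⌋ + k * d i, ?_⟩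
        have : ψ k i = a i + ((k:ℝ)/m) * (b i - a i) := rfl
        rw [this, haint i, hbint i]
        have : (⌊b i⌋ : ℝ) - ⌊a i⌋ = (m : ℝ) * (d i : ℝ) := by
          rw [← Int.cast_sub, ← hd i]; push_cast; ring
        rw [this]
        field_simp
        rw [Int.floor_intCast]; push_cast; ring
    have hψinj : Function.Injective ψ := by
      intro k k' hkk
      obtain ⟨i, hi⟩ := Function.ne_iff.mp hab
      have := congrFun hkk i
      have h1 : a i + ((k:ℝ)/m) * (b i - a i) = a i + ((k':ℝ)/m) * (b i - a i) := this
      have h2 : ((k:ℝ)/m) = ((k':ℝ)/m) := by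
        have hba : b i - a i ≠ 0 := sub_ne_zero.mpr (Ne.symm hi)
        have h3 : ((k:ℝ)/m - (k':ℝ)/m) * (b i - a i) = 0 := by rw [sub_mul]; linarith
        exact sub_eq_zero.mp ((mul_eq_zero.mp h3).resolve_right hba)
      have : (k:ℝ) = (k':ℝ) := by field_simp at h2; exact_mod_cast h2
      exact Fin.ext (by exact_mod_cast this)
    -- count the lattice points on this line
    have hfin : ((K ∩ {x | ∃ s : ℝ, x = a + s • (b - a)}) ∩ intLat n).Finite :=
      hSfin.subset (by intro z hz; exact ⟨hz.1.1, hz.2⟩)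
    haveI := hfin.to_subtype
    have hcard : m + 1 ≤ latCount (K ∩ {x | ∃ s : ℝ, x = a + s • (b - a)}) := by
      have : Function.Injective
          (fun k : Fin (m+1) => (⟨ψ k, hψmem k⟩ :
            ↥((K ∩ {x | ∃ s : ℝ, x = a + s • (b - a)}) ∩ intLat n))) := by
        intro k k' h
        exact hψinj (congrArg Subtype.val h)
      have := Nat.card_le_card_of_injective _ this
      rw [Nat.card_fin] at this; exact this
    have := hline a (b - a) hvne
    omega
  -- conclude N ≤ m ^ n
  have hNle : N ≤ m ^ n := by
    have h := Nat.card_le_card_of_injective φ hinj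
    have hcard : Nat.card (Fin n → ZMod m) = m ^ n := by
      rw [Nat.card_eq_fintype_card, Fintype.card_fun]
      simp [ZMod.card]
    rw [hcard] at h
    exact h
  -- so c ≤ m, contradicting m = ⌈c⌉₊ - 1
  have hcm : c ≤ (m : ℝ) := by
    have h1 : (N : ℝ) ≤ ((m : ℝ)) ^ (n : ℕ) := by exact_mod_cast hNle
    calc c ≤ (((m:ℝ)) ^ (n:ℕ)) ^ (1 / (n:ℝ)) :=
          Real.rpow_le_rpow (Nat.cast_nonneg N) h1 (by positivity)
      _ = (m : ℝ) := by
          rw [← Real.rpow_natCast (m:ℝ) n, ← Real.rpow_mul (Nat.cast_nonneg m),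
            mul_one_div, div_self hn0, Real.rpow_one]
  have : ⌈c⌉₊ ≤ m := Nat.ceil_le.mpr hcm
  omega
end
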